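/- arXiv:1403.7517 — 4 statements merged into one kernel-verified Lean document; each statement's English description precedes it below -/
import Mathlib

section
/- Let X be a random variable uniform on [-1,1] and fix s ∈ (0,1]. Then P(|min(X,s)| < |Y|), where Y is an independent uniform random variable on [-1,1], equals (s² - 2s + 3)/4. -/
open MeasureTheory

noncomputable def unif : Measure ℝ :=
  (2 : ENNReal)⁻¹ • (volume.restrict (Set.Icc (-1 : ℝ) 1))

lemma unif_slice (t : ℝ) (ht : 0 ≤ t) :
    unif {y : ℝ | t < |y|} = ENNReal.ofReal (1 - t) := by
  have hset : {y : ℝ | t < |y|} ∩ Set.Icc (-1 : ℝ) 1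
      = Set.Ico (-1 : ℝ) (-t) ∪ Set.Ioc t 1 := by
    ext y
    simp only [Set.mem_inter_iff, Set.mem_setOf_eq, Set.mem_Icc, Set.mem_union,
      Set.mem_Ico, Set.mem_Ioc, lt_abs]
    constructor
    · rintro ⟨h1 | h1, h2, h3⟩
      · right; exact ⟨h1, h3⟩
      · left; exact ⟨h2, by linarith⟩
    · rintro (⟨h1, h2⟩ | ⟨h1, h2⟩)
      · exact ⟨Or.inr (by linarith), h1, by linarith⟩
      · exact ⟨Or.inl h1, by linarith, h2⟩
  have hmeas : MeasurableSet {y : ℝ | t < |y|} :=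
    measurableSet_lt measurable_const (by fun_prop)
  have hdisj : Disjoint (Set.Ico (-1 : ℝ) (-t)) (Set.Ioc t 1) := by
    apply Set.disjoint_left.2
    rintro y ⟨_, h2⟩ ⟨h3, _⟩
    linarith
  rw [unif, Measure.smul_apply, Measure.restrict_apply hmeas, hset,
    measure_union hdisj measurableSet_Ioc, Real.volume_Ico, Real.volume_Ioc,
    smul_eq_mul]
  rw [show (-t - -1 : ℝ) = 1 - t by ring]
  rw [← two_mul, ← mul_assoc, ENNReal.inv_mul_cancel (by norm_num) (by norm_num),
    one_mul]

instance : SFinite unif := by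
  unfold unif; infer_instance

set_option maxHeartbeats 1000000 in
theorem stmt_0 (s : ℝ) (hs0 : 0 < s) (hs1 : s ≤ 1) :
    ((unif.prod unif) {p : ℝ × ℝ | |min p.1 s| < |p.2|}).toReal
      = (s ^ 2 - 2 * s + 3) / 4 := by
  have hS : MeasurableSet {p : ℝ × ℝ | |min p.1 s| < |p.2|} :=
    measurableSet_lt (by fun_prop) (by fun_prop)
  rw [Measure.prod_apply hS]
  have hslice : ∀ x : ℝ, unif {y : ℝ | |min x s| < |y|}
      = ENNReal.ofReal (1 - |min x s|) := fun x => unif_slice _ (abs_nonneg _)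
  simp only [Set.preimage_setOf_eq]
  simp_rw [hslice]
  rw [show (unif : Measure ℝ) = (2 : ENNReal)⁻¹ • (volume.restrict (Set.Icc (-1 : ℝ) 1)) from rfl,
    lintegral_smul_measure]
  have hcont : Continuous (fun x : ℝ => 1 - |min x s|) := by fun_prop
  have hint : IntegrableOn (fun x : ℝ => 1 - |min x s|) (Set.Icc (-1 : ℝ) 1) :=
    hcont.integrableOn_Icc
  have hnn : 0 ≤ᵐ[volume.restrict (Set.Icc (-1 : ℝ) 1)] fun x : ℝ => 1 - |min x s| := by
    filter_upwards [ae_restrict_mem measurableSet_Icc] with x hx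
    have h1 : min x s ≤ 1 := le_trans (min_le_right _ _) hs1
    have h2 : -1 ≤ min x s := le_min hx.1 (by linarith)
    have : |min x s| ≤ 1 := abs_le.2 ⟨h2, h1⟩
    simp only [Pi.zero_apply]; linarith
  rw [← ofReal_integral_eq_lintegral_ofReal hint hnn]
  have hI : ∫ x in Set.Icc (-1 : ℝ) 1, (1 - |min x s|) = 3 / 2 - s + s ^ 2 / 2 := by
    rw [integral_Icc_eq_integral_Ioc, ← intervalIntegral.integral_of_le (by linarith : (-1:ℝ) ≤ 1)]
    have h1 : ∫ x in (-1 : ℝ)..0, (1 - |min x s|) = 1 / 2 := by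
      rw [intervalIntegral.integral_congr (g := fun x => 1 + x)
        (fun x hx => by
          rw [Set.uIcc_of_le (by norm_num : (-1:ℝ) ≤ 0)] at hx
          rw [min_eq_left (le_trans hx.2 hs0.le), abs_of_nonpos hx.2]; ring)]
      simp [intervalIntegral.integral_add intervalIntegrable_const intervalIntegral.intervalIntegrable_id]
      norm_num
    have h2 : ∫ x in (0 : ℝ)..s, (1 - |min x s|) = s - s ^ 2 / 2 := by
      rw [intervalIntegral.integral_congr (g := fun x => 1 - x)
        (fun x hx => by
          rw [Set.uIcc_of_le hs0.le] at hx
          rw [min_eq_left hx.2, abs_of_nonneg hx.1])]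
      rw [intervalIntegral.integral_sub intervalIntegrable_const
        intervalIntegral.intervalIntegrable_id]
      simp
    have h3 : ∫ x in s..(1 : ℝ), (1 - |min x s|) = (1 - s) * (1 - s) := by
      rw [intervalIntegral.integral_congr (g := fun _ => 1 - s)
        (fun x hx => by
          rw [Set.uIcc_of_le hs1] at hx
          rw [min_eq_right hx.1, abs_of_nonneg hs0.le])]
      simp
      ring
    have ha : ∫ x in (-1 : ℝ)..s, (1 - |min x s|) = 1 / 2 + (s - s ^ 2 / 2) := by
      rw [← intervalIntegral.integral_add_adjacent_intervals
        (a := (-1:ℝ)) (b := 0) (c := s)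
        ((hcont.intervalIntegrable _ _)) ((hcont.intervalIntegrable _ _)), h1, h2]
    rw [← intervalIntegral.integral_add_adjacent_intervals
      (a := (-1:ℝ)) (b := s) (c := 1)
      ((hcont.intervalIntegrable _ _)) ((hcont.intervalIntegrable _ _)), ha, h3]
    ring
  rw [hI]
  rw [smul_eq_mul, ENNReal.toReal_mul, ENNReal.toReal_ofReal (by nlinarith)]
  simp
  nlinarith
end

section
/- Let X be a random variable uniform on [-1,1] and fix s ∈ [-1,0]. Then P(|min(X,s)| < |Y|), where Y is an independent uniform random variable on [-1,1], equals (-s² + 2s + 3)/4. -/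
open MeasureTheory

lemma unif_abs_gt (c : ℝ) (hc : 0 ≤ c) :
    unif {y : ℝ | c < |y|} = ENNReal.ofReal (1 - c) := by
  have hset : {y : ℝ | c < |y|} ∩ Set.Icc (-1 : ℝ) 1
      = Set.Ico (-1 : ℝ) (-c) ∪ Set.Ioc c 1 := by
    ext y
    simp only [Set.mem_inter_iff, Set.mem_setOf_eq, Set.mem_Icc, Set.mem_union,
      Set.mem_Ico, Set.mem_Ioc, lt_abs]
    constructor
    · rintro ⟨h | h, h1, h2⟩
      · right; exact ⟨h, h2⟩
      · left; exact ⟨h1, by linarith⟩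
    · rintro (⟨h1, h2⟩ | ⟨h1, h2⟩)
      · exact ⟨Or.inr (by linarith), h1, by linarith⟩
      · exact ⟨Or.inl h1, by linarith, h2⟩
  have hdisj : Disjoint (Set.Ico (-1 : ℝ) (-c)) (Set.Ioc c 1) := by
    rw [Set.disjoint_left]
    rintro y ⟨_, h2⟩ ⟨h3, _⟩
    linarith
  have hmeas : MeasurableSet {y : ℝ | c < |y|} := by
    apply measurableSet_lt measurable_const
    exact measurable_id.abs
  rw [unif, Measure.smul_apply, Measure.restrict_apply hmeas, hset,
    measure_union hdisj measurableSet_Ioc, Real.volume_Ico, Real.volume_Ioc]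
  have : -c - -1 = 1 - c := by ring
  rw [this, ← two_mul, smul_eq_mul, ← mul_assoc,
    ENNReal.inv_mul_cancel two_ne_zero (by norm_num), one_mul]

instance : IsFiniteMeasure unif := by
  constructor
  rw [unif, Measure.smul_apply, Measure.restrict_apply MeasurableSet.univ]
  simp [Real.volume_Icc]
  finiteness

set_option maxHeartbeats 1000000 in
theorem stmt_1 (s : ℝ) (hs0 : -1 ≤ s) (hs1 : s ≤ 0) :
    ((unif.prod unif) {p : ℝ × ℝ | |min p.1 s| < |p.2|}).toReal
      = (-s ^ 2 + 2 * s + 3) / 4 := by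
  have hSm : MeasurableSet {p : ℝ × ℝ | |min p.1 s| < |p.2|} := by
    apply measurableSet_lt
    · exact ((measurable_fst.min measurable_const).abs)
    · exact measurable_snd.abs
  rw [Measure.prod_apply hSm]
  have hpre : ∀ x : ℝ, (Prod.mk x ⁻¹' {p : ℝ × ℝ | |min p.1 s| < |p.2|})
      = {y : ℝ | |min x s| < |y|} := fun x => rfl
  have hslice : ∀ x : ℝ, unif (Prod.mk x ⁻¹' {p : ℝ × ℝ | |min p.1 s| < |p.2|})
      = ENNReal.ofReal (1 - |min x s|) := fun x => by
    rw [hpre x]; exact unif_abs_gt _ (abs_nonneg _)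
  rw [lintegral_congr hslice]
  have hcont : Continuous fun x : ℝ => 1 - |min x s| :=
    continuous_const.sub ((continuous_id.min continuous_const).abs)
  have hint : IntegrableOn (fun x : ℝ => 1 - |min x s|) (Set.Icc (-1 : ℝ) 1) volume :=
    hcont.integrableOn_Icc
  have hnn : 0 ≤ᵐ[volume.restrict (Set.Icc (-1 : ℝ) 1)] fun x : ℝ => 1 - |min x s| := by
    refine (ae_restrict_iff' measurableSet_Icc).2 (ae_of_all _ fun x hx => ?_)
    have h1 : -1 ≤ min x s := le_min hx.1 hs0
    have h2 : min x s ≤ 0 := le_trans (min_le_right x s) hs1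
    have h3 : |min x s| ≤ 1 := abs_le.2 ⟨h1, by linarith⟩
    show (0:ℝ) ≤ 1 - |min x s|
    linarith
  rw [show (unif : Measure ℝ) = (2 : ENNReal)⁻¹ • (volume.restrict (Set.Icc (-1 : ℝ) 1))
      from rfl, lintegral_smul_measure, ← ofReal_integral_eq_lintegral_ofReal hint hnn]
  have hval : ∫ x in Set.Icc (-1 : ℝ) 1, (1 - |min x s|)
      = (1 + s) ^ 2 / 2 + (1 + s) * (1 - s) := by
    rw [MeasureTheory.integral_Icc_eq_integral_Ioc,
      ← intervalIntegral.integral_of_le (by linarith : (-1 : ℝ) ≤ 1),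
      ← intervalIntegral.integral_add_adjacent_intervals
        (a := -1) (b := s) (c := 1)
        (hcont.intervalIntegrable _ _) (hcont.intervalIntegrable _ _)]
    have e1 : ∫ x in (-1 : ℝ)..s, (1 - |min x s|) = ∫ x in (-1 : ℝ)..s, (1 + x) := by
      apply intervalIntegral.integral_congr
      intro x hx
      rw [Set.uIcc_of_le (by linarith : (-1:ℝ) ≤ s)] at hx
      show 1 - |min x s| = 1 + x
      rw [min_eq_left hx.2, abs_of_nonpos (by linarith [hx.2] : x ≤ 0)]
      ring
    have e2 : ∫ x in s..(1 : ℝ), (1 - |min x s|) = ∫ x in s..(1 : ℝ), (1 + s) := by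
      apply intervalIntegral.integral_congr
      intro x hx
      rw [Set.uIcc_of_le (by linarith : s ≤ (1:ℝ))] at hx
      show 1 - |min x s| = 1 + s
      rw [min_eq_right hx.1, abs_of_nonpos hs1]
      ring
    rw [e1, e2, intervalIntegral.integral_const]
    have e3 : ∫ x in (-1 : ℝ)..s, (1 + x)
        = (s - (-1)) • (1:ℝ) + (s ^ 2 - (-1) ^ 2) / 2 := by
      rw [intervalIntegral.integral_add intervalIntegrable_const intervalIntegral.intervalIntegrable_id,
        intervalIntegral.integral_const, integral_id]
    rw [e3]
    simp only [smul_eq_mul]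
    ring
  rw [hval, smul_eq_mul, ENNReal.toReal_mul, ENNReal.toReal_ofReal (by nlinarith)]
  rw [show ((2 : ENNReal)⁻¹).toReal = 2⁻¹ by simp]
  ring
end

section
/- Let X₁,…,X_k be i.i.d. with an absolutely continuous distribution function F. If |min(X₁,…,X_k)| and |max(X₁,…,X_k)| have the same distribution, then F is symmetric about zero: F(−x) = 1 − F(x) for all x. -/
open Set Filter Topology MeasureTheory ProbabilityTheory


open Set Filter Topology MeasureTheory

lemma psi_strictMonoOn (k : ℕ) (hk : 2 ≤ k) :
    StrictMonoOn (fun d : ℝ => (1/2 + d)^k + (1/2 - d)^k) (Icc 0 (1/2)) := by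
  refine strictMonoOn_of_deriv_pos (convex_Icc (0:ℝ) (1/2)) (by fun_prop) ?_
  intro d hd
  rw [interior_Icc, mem_Ioo] at hd
  have h1 : HasDerivAt (fun d : ℝ => (1/2 + d)^k) ((k:ℝ) * (1/2 + d)^(k-1) * 1) d :=
    ((hasDerivAt_id d).const_add (1/2)).pow k
  have h2 : HasDerivAt (fun d : ℝ => (1/2 - d)^k) ((k:ℝ) * (1/2 - d)^(k-1) * (-1)) d :=
    ((hasDerivAt_id d).const_sub (1/2)).pow k
  rw [show (fun d : ℝ => (1/2 + d)^k + (1/2 - d)^k) = ((fun d : ℝ => (1/2 + d)^k) + fun d : ℝ => (1/2 - d)^k) from rfl, (h1.add h2).deriv]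
  have hlt : (1/2 - d : ℝ)^(k-1) < (1/2 + d)^(k-1) :=
    pow_lt_pow_left₀ (by linarith) (by linarith) (by omega)
  have hk0 : (0:ℝ) < k := by positivity
  nlinarith

lemma phi_eq_psi {a : ℝ} (ha : a ∈ Icc (0:ℝ) 1) (k : ℕ) :
    a^k + (1-a)^k = (1/2 + |a - 1/2|)^k + (1/2 - |a - 1/2|)^k := by
  rcases le_or_gt (1/2) a with h | h
  · rw [abs_of_nonneg (by linarith)]; ring_nf
  · rw [abs_of_neg (by linarith)]; ring_nf

lemma phi_inj {k : ℕ} (hk : 2 ≤ k) {a b : ℝ} (ha : a ∈ Icc (0:ℝ) 1) (hb : b ∈ Icc (0:ℝ) 1)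
    (h : a^k + (1-a)^k = b^k + (1-b)^k) : a = b ∨ a = 1 - b := by
  have hmem : ∀ c : ℝ, c ∈ Icc (0:ℝ) 1 → |c - 1/2| ∈ Icc (0:ℝ) (1/2) := by
    intro c hc
    simp only [mem_Icc] at hc ⊢
    constructor
    · positivity
    · rw [abs_le]; constructor <;> linarith [hc.1, hc.2]
  rw [phi_eq_psi ha k, phi_eq_psi hb k] at h
  have := (psi_strictMonoOn k hk).injOn (hmem a ha) (hmem b hb) h
  rcases abs_eq_abs.1 this with h' | h'
  · left; linarith
  · right; linarith

lemma symmetry_of_phi {k : ℕ} (hk : 2 ≤ k) {F : ℝ → ℝ} (hcont : Continuous F)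
    (hmono : Monotone F) (h01 : ∀ x, F x ∈ Icc (0:ℝ) 1)
    (htop : Tendsto F atTop (𝓝 1)) (hbot : Tendsto F atBot (𝓝 0))
    (hyp : ∀ t : ℝ, 0 ≤ t → F t ^ k + (1 - F t)^k = F (-t) ^ k + (1 - F (-t))^k) :
    ∀ x : ℝ, F (-x) = 1 - F x := by
  have key : ∀ t : ℝ, 0 ≤ t → F (-t) = 1 - F t := by
    intro t ht
    rcases phi_inj hk (h01 t) (h01 (-t)) (hyp t ht) with h | h
    swap
    · linarith
    -- F t = F (-t) =: c
    rcases lt_trichotomy (F t) (1/2) with hc | hc | hc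
    · exfalso
      obtain ⟨T, hT⟩ : ∃ T : ℝ, t ≤ T ∧ 1/2 < F T := by
        have := (htop.eventually (eventually_gt_nhds (by norm_num : (1:ℝ)/2 < 1)))
        rcases (this.and (eventually_ge_atTop t)).exists with ⟨T, h1, h2⟩
        exact ⟨T, h2, h1⟩
      obtain ⟨s, hs, hFs⟩ := intermediate_value_Icc hT.1 (hcont.continuousOn)
        (by constructor <;> [linarith; linarith] : (1:ℝ)/2 ∈ Icc (F t) (F T))
      have hFns : F (-s) = 1/2 := by
        rcases phi_inj hk (h01 s) (h01 (-s)) (hyp s (le_trans ht hs.1)) with h' | h' <;> linarith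
      have hle : F (-s) ≤ F (-t) := hmono (by linarith [hs.1])
      linarith
    · linarith
    · exfalso
      have hcont' : Continuous (fun s => F (-s)) := hcont.comp continuous_neg
      have hbot' : Tendsto (fun s => F (-s)) atTop (𝓝 0) := hbot.comp tendsto_neg_atTop_atBot
      obtain ⟨T, hT⟩ : ∃ T : ℝ, t ≤ T ∧ F (-T) < 1/2 := by
        have := (hbot'.eventually (eventually_lt_nhds (by norm_num : (0:ℝ) < 1/2)))
        rcases (this.and (eventually_ge_atTop t)).exists with ⟨T, h1, h2⟩
        exact ⟨T, h2, h1⟩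
      have hmem : (1:ℝ)/2 ∈ Icc (F (-T)) (F (-t)) := by
        constructor <;> [linarith; linarith [h ▸ hc]]
      obtain ⟨s, hs, hFs⟩ := intermediate_value_Icc' hT.1 (hcont'.continuousOn) hmem
      simp only at hFs
      have hFss : F s = 1/2 := by
        rcases phi_inj hk (h01 s) (h01 (-s)) (hyp s (le_trans ht hs.1)) with h' | h' <;> linarith
      have : F t ≤ F s := hmono hs.1
      linarith
  intro x
  rcases le_or_gt 0 x with hx | hx
  · exact key x hx
  · have := key (-x) (by linarith)
    rw [neg_neg] at this
    linarith

open Set Filter Topology MeasureTheory ProbabilityTheory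

lemma cdf_cont (μ : Measure ℝ) [IsProbabilityMeasure μ] (hac : μ ≪ volume) :
    Continuous (fun x => (μ (Iic x)).toReal) := by
  have hfun : (fun x => (μ (Iic x)).toReal) = cdf μ := by
    ext x; exact (cdf_eq_real μ x).symm
  rw [hfun]
  rw [continuous_iff_continuousAt]
  intro x
  have hmono := monotone_cdf (μ := μ)
  rw [hmono.continuousAt_iff_leftLim_eq_rightLim]
  have hr : Function.rightLim (cdf μ) x = cdf μ x := by
    rw [← hmono.continuousWithinAt_Ioi_iff_rightLim_eq]
    exact ((cdf μ).right_continuous x).mono Ioi_subset_Ici_self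
  have hsing : μ {x} = 0 := hac (by simp)
  have hmeas : (cdf μ).measure {x} = 0 := by rw [measure_cdf]; exact hsing
  rw [StieltjesFunction.measure_singleton] at hmeas
  have hl : Function.leftLim (cdf μ) x = cdf μ x := by
    have h1 : Function.leftLim (cdf μ) x ≤ cdf μ x := hmono.leftLim_le le_rfl
    have h2 : cdf μ x - Function.leftLim (cdf μ) x ≤ 0 := by
      by_contra hcon
      push_neg at hcon
      rw [ENNReal.ofReal_eq_zero] at hmeas
      linarith
    linarith
  rw [hl, hr]

theorem stmt_6 {Ω : Type*} [MeasurableSpace Ω] (P : Measure Ω) [IsProbabilityMeasure P]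
    (k : ℕ) (hk : 2 ≤ k) (X : Fin k → Ω → ℝ) (hX : ∀ i, Measurable (X i))
    (hindep : iIndepFun X P)
    (μ : Measure ℝ) (hid : ∀ i, Measure.map (X i) P = μ)
    (hac : μ ≪ volume)
    (heq : Measure.map (fun ω =>
        |Finset.univ.inf' (Finset.univ_nonempty_iff.2 ⟨⟨0, by omega⟩⟩) (fun i => X i ω)|) P
      = Measure.map (fun ω =>
        |Finset.univ.sup' (Finset.univ_nonempty_iff.2 ⟨⟨0, by omega⟩⟩) (fun i => X i ω)|) P) :
    ∀ x : ℝ, (μ (Set.Iic (-x))).toReal = 1 - (μ (Set.Iic x)).toReal := by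
  classical
  have i0 : Fin k := ⟨0, by omega⟩
  have hne : (Finset.univ : Finset (Fin k)).Nonempty := Finset.univ_nonempty_iff.2 ⟨i0⟩
  have hμ : IsProbabilityMeasure μ := by
    rw [← hid i0]; exact Measure.isProbabilityMeasure_map (hX i0).aemeasurable
  set M : Ω → ℝ := fun ω => Finset.univ.inf' hne (fun i => X i ω) with hMdef
  set S : Ω → ℝ := fun ω => Finset.univ.sup' hne (fun i => X i ω) with hSdef
  have hMm : Measurable M := by
    have h1 : Measurable (Finset.univ.inf' hne X) :=
      Finset.inf'_induction hne _ (fun f hf g hg => hf.inf hg) (fun i _ => hX i)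
    have hfun : M = Finset.univ.inf' hne X := by
      funext ω; rw [Finset.inf'_apply]
    rwa [hfun]
  have hSm : Measurable S := by
    have h1 : Measurable (Finset.univ.sup' hne X) :=
      Finset.measurable_sup' hne (fun i _ => hX i)
    have hfun : S = Finset.univ.sup' hne X := by
      funext ω; rw [Finset.sup'_apply]
    rwa [hfun]
  -- preimage measure
  have hpre : ∀ (s : Set ℝ), MeasurableSet s → ∀ i, P (X i ⁻¹' s) = μ s := by
    intro s hs i; rw [← hid i, Measure.map_apply (hX i) hs]
  -- max CDF
  have hSIic : ∀ t : ℝ, P (S ⁻¹' Iic t) = μ (Iic t) ^ k := by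
    intro t
    have hset : S ⁻¹' Iic t = ⋂ i ∈ (Finset.univ : Finset (Fin k)), X i ⁻¹' Iic t := by
      ext ω; simp [hSdef, Finset.sup'_le_iff]
    rw [hset, hindep.measure_inter_preimage_eq_mul Finset.univ
      (sets := fun _ => Iic t) (fun i _ => measurableSet_Iic)]
    simp [hpre _ measurableSet_Iic]
  -- min tail
  have hMIoi : ∀ t : ℝ, P (M ⁻¹' Ioi t) = μ (Ioi t) ^ k := by
    intro t
    have hset : M ⁻¹' Ioi t = ⋂ i ∈ (Finset.univ : Finset (Fin k)), X i ⁻¹' Ioi t := by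
      ext ω; simp [hMdef, Finset.lt_inf'_iff]
    rw [hset, hindep.measure_inter_preimage_eq_mul Finset.univ
      (sets := fun _ => Ioi t) (fun i _ => measurableSet_Ioi)]
    simp [hpre _ measurableSet_Ioi]
  have hMIic : ∀ t : ℝ, P (M ⁻¹' Iic t) = 1 - μ (Ioi t) ^ k := by
    intro t
    have hset : M ⁻¹' Iic t = (M ⁻¹' Ioi t)ᶜ := by
      ext ω; simp
    rw [hset, prob_compl_eq_one_sub (hMm measurableSet_Ioi), hMIoi]
  -- null singletons
  have hXnull : ∀ (i : Fin k) (a : ℝ), P (X i ⁻¹' {a}) = 0 := by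
    intro i a
    rw [hpre _ (measurableSet_singleton a) i]
    exact hac (by simp)
  have hWnull : ∀ (W : Ω → ℝ), (∀ ω, ∃ i : Fin k, W ω = X i ω) → ∀ a : ℝ, P (W ⁻¹' {a}) = 0 := by
    intro W hW a
    refine measure_mono_null (fun ω hω => ?_) (measure_iUnion_null (fun i => hXnull i a))
    obtain ⟨i, hi⟩ := hW ω
    exact mem_iUnion.2 ⟨i, by simp only [mem_preimage, mem_singleton_iff] at hω ⊢; rw [← hi]; exact hω⟩
  have hMnull : ∀ a : ℝ, P (M ⁻¹' {a}) = 0 := by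
    refine hWnull M (fun ω => ?_)
    obtain ⟨i, _, hi⟩ := Finset.exists_mem_eq_inf' hne (fun i => X i ω)
    exact ⟨i, hi⟩
  have hSnull : ∀ a : ℝ, P (S ⁻¹' {a}) = 0 := by
    refine hWnull S (fun ω => ?_)
    obtain ⟨i, _, hi⟩ := Finset.exists_mem_eq_sup' hne (fun i => X i ω)
    exact ⟨i, hi⟩
  -- split lemma
  have hsplit : ∀ (W : Ω → ℝ), Measurable W → (∀ a : ℝ, P (W ⁻¹' {a}) = 0) →
      ∀ t : ℝ, 0 ≤ t →
      P (W ⁻¹' Iic (-t)) + P (W ⁻¹' Icc (-t) t) = P (W ⁻¹' Iic t) := by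
    intro W hWm hWn t ht
    have h1 : P (W ⁻¹' Icc (-t) t) = P (W ⁻¹' Ioc (-t) t) := by
      apply le_antisymm
      · calc P (W ⁻¹' Icc (-t) t) ≤ P (W ⁻¹' {-t} ∪ W ⁻¹' Ioc (-t) t) := by
              apply measure_mono
              intro ω hω
              simp only [mem_preimage, mem_Icc] at hω
              rcases eq_or_lt_of_le hω.1 with h | h
              · exact Or.inl (by simp [← h])
              · exact Or.inr (by simp [h, hω.2])
          _ ≤ P (W ⁻¹' {-t}) + P (W ⁻¹' Ioc (-t) t) := measure_union_le _ _
          _ = P (W ⁻¹' Ioc (-t) t) := by rw [hWn (-t), zero_add]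
      · exact measure_mono (fun ω hω => by
          simp only [mem_preimage, mem_Ioc] at hω
          exact ⟨le_of_lt hω.1, hω.2⟩)
    rw [h1, ← measure_union ?hd ?hm]
    · congr 1
      rw [← preimage_union, Iic_union_Ioc_eq_Iic (by linarith : -t ≤ t)]
    case hd => exact (Iic_disjoint_Ioc le_rfl).preimage W
    case hm => exact hWm measurableSet_Ioc
  -- abs preimages and heq
  have hIcc : ∀ t : ℝ, 0 ≤ t → P (M ⁻¹' Icc (-t) t) = P (S ⁻¹' Icc (-t) t) := by
    intro t ht
    have h := congrArg (fun ν : Measure ℝ => ν (Iic t)) heq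
    rw [Measure.map_apply (hMm.abs) measurableSet_Iic,
        Measure.map_apply (hSm.abs) measurableSet_Iic] at h
    have hM' : (fun ω => |M ω|) ⁻¹' Iic t = M ⁻¹' Icc (-t) t := by
      ext ω; simp [abs_le]
    have hS' : (fun ω => |S ω|) ⁻¹' Iic t = S ⁻¹' Icc (-t) t := by
      ext ω; simp [abs_le]
    rw [hM', hS'] at h
    exact h
  -- real CDF
  set F : ℝ → ℝ := fun x => (μ (Iic x)).toReal with hFdef
  have hμIic_le : ∀ s : ℝ, μ (Iic s) ≤ 1 := fun s => prob_le_one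
  have hμIic_ne : ∀ s : ℝ, μ (Iic s) ≠ ⊤ := fun s => (lt_of_le_of_lt (hμIic_le s) ENNReal.one_lt_top).ne
  have hGoi : ∀ s : ℝ, (μ (Ioi s)).toReal = 1 - F s := by
    intro s
    have : Ioi s = (Iic s)ᶜ := by simp
    rw [this, prob_compl_eq_one_sub measurableSet_Iic,
      ENNReal.toReal_sub_of_le (hμIic_le s) ENNReal.one_ne_top, ENNReal.toReal_one]
  -- the key identity
  have hyp : ∀ t : ℝ, 0 ≤ t → F t ^ k + (1 - F t)^k = F (-t) ^ k + (1 - F (-t))^k := by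
    intro t ht
    have hS2 := hsplit S hSm hSnull t ht
    have hM2 := hsplit M hMm hMnull t ht
    rw [hSIic, hSIic] at hS2
    rw [hMIic, hMIic] at hM2
    rw [← hIcc t ht] at hS2
    -- convert to reals
    have hIccne : P (M ⁻¹' Icc (-t) t) ≠ ⊤ := (measure_lt_top P _).ne
    have hpowle : ∀ s : ℝ, μ (Ioi s) ^ k ≤ 1 := fun s => pow_le_one' prob_le_one k
    have hpowne : ∀ s : ℝ, μ (Iic s) ^ k ≠ ⊤ := fun s => by
      exact ENNReal.pow_ne_top (hμIic_ne s)
    have e1 := congrArg ENNReal.toReal hS2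
    have e2 := congrArg ENNReal.toReal hM2
    rw [ENNReal.toReal_add (hpowne (-t)) hIccne, ENNReal.toReal_pow, ENNReal.toReal_pow] at e1
    rw [ENNReal.toReal_add (by
        exact (ENNReal.sub_ne_top ENNReal.one_ne_top)) hIccne,
      ENNReal.toReal_sub_of_le (hpowle (-t)) ENNReal.one_ne_top,
      ENNReal.toReal_sub_of_le (hpowle t) ENNReal.one_ne_top,
      ENNReal.toReal_pow, ENNReal.toReal_pow, ENNReal.toReal_one, hGoi, hGoi] at e2
    have hFt : (μ (Iic t)).toReal = F t := rfl
    have hFnt : (μ (Iic (-t))).toReal = F (-t) := rfl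
    rw [hFt, hFnt] at e1
    linarith
  -- properties of F
  have hfun : F = fun x => cdf μ x := by
    ext x; rw [hFdef]; exact (cdf_eq_real μ x).symm
  have hcont : Continuous F := cdf_cont μ hac
  have hmono : Monotone F := fun a b hab =>
    ENNReal.toReal_mono (hμIic_ne b) (measure_mono (Iic_subset_Iic.2 hab))
  have h01 : ∀ x, F x ∈ Icc (0:ℝ) 1 := by
    intro x
    exact ⟨ENNReal.toReal_nonneg, by
      rw [hFdef]
      exact ENNReal.toReal_le_of_le_ofReal zero_le_one (by simpa using hμIic_le x)⟩
  have htop : Tendsto F atTop (𝓝 1) := by rw [hfun]; exact tendsto_cdf_atTop μ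
  have hbot : Tendsto F atBot (𝓝 0) := by rw [hfun]; exact tendsto_cdf_atBot μ
  exact symmetry_of_phi hk hcont hmono h01 htop hbot hyp
end

section
/- Let X₁,…,X_{k-1}, Z be i.i.d. uniform on [-1,1] and s ∈ (0,1]. Then P(|min(X₁,…,X_{k-1},s)| < |Z|) = (2^k − 2 + (1−s)^k)/(k·2^{k-1}). -/
open MeasureTheory Set

instance : IsProbabilityMeasure unif := by
  constructor
  simp [unif, Real.volume_Icc, Measure.restrict_apply MeasurableSet.univ]
  rw [show (1 : ℝ) + 1 = 2 by ring, ENNReal.ofReal_ofNat,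
    ENNReal.inv_mul_cancel (by norm_num) (by norm_num)]

lemma unif_Ioi (t : ℝ) (h1 : -1 ≤ t) (h2 : t ≤ 1) :
    unif (Set.Ioi t) = ENNReal.ofReal ((1 - t) / 2) := by
  rw [unif, Measure.smul_apply, Measure.restrict_apply measurableSet_Ioi]
  rw [show Set.Ioi t ∩ Set.Icc (-1 : ℝ) 1 = Set.Ioc t 1 by
    ext x
    simp only [Set.mem_inter_iff, Set.mem_Ioi, Set.mem_Icc, Set.mem_Ioc]
    constructor
    · rintro ⟨h, _, h'⟩; exact ⟨h, h'⟩
    · rintro ⟨h, h'⟩; exact ⟨h, by linarith, h'⟩]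
  rw [Real.volume_Ioc, smul_eq_mul, ← ENNReal.ofReal_ofNat 2,
    ← ENNReal.ofReal_inv_of_pos (by norm_num), ← ENNReal.ofReal_mul (by positivity)]
  ring_nf

lemma unif_Ici (t : ℝ) (h1 : -1 ≤ t) (h2 : t ≤ 1) :
    unif (Set.Ici t) = ENNReal.ofReal ((1 - t) / 2) := by
  rw [unif, Measure.smul_apply, Measure.restrict_apply measurableSet_Ici]
  rw [show Set.Ici t ∩ Set.Icc (-1 : ℝ) 1 = Set.Icc t 1 by
    ext x
    simp only [Set.mem_inter_iff, Set.mem_Ici, Set.mem_Icc]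
    constructor
    · rintro ⟨h, _, h'⟩; exact ⟨h, h'⟩
    · rintro ⟨h, h'⟩; exact ⟨h, by linarith, h'⟩]
  rw [Real.volume_Icc, smul_eq_mul, ← ENNReal.ofReal_ofNat 2,
    ← ENNReal.ofReal_inv_of_pos (by norm_num), ← ENNReal.ofReal_mul (by positivity)]
  ring_nf

lemma pi_cube_Ioi (n : ℕ) (a : ℝ) (h1 : -1 ≤ a) (h2 : a ≤ 1) :
    (Measure.pi fun _ : Fin n => unif) {x | ∀ i, a < x i}
      = ENNReal.ofReal ((1 - a) / 2) ^ n := by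
  have h : {x : Fin n → ℝ | ∀ i, a < x i} = Set.pi Set.univ (fun _ => Set.Ioi a) := by
    ext x; simp [Set.mem_pi]
  rw [h, Measure.pi_pi]
  simp [unif_Ioi a h1 h2, Finset.prod_const]

lemma pi_cube_Ici (n : ℕ) (a : ℝ) (h1 : -1 ≤ a) (h2 : a ≤ 1) :
    (Measure.pi fun _ : Fin n => unif) {x | ∀ i, a ≤ x i}
      = ENNReal.ofReal ((1 - a) / 2) ^ n := by
  have h : {x : Fin n → ℝ | ∀ i, a ≤ x i} = Set.pi Set.univ (fun _ => Set.Ici a) := by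
    ext x; simp [Set.mem_pi, Pi.le_def]
  rw [h, Measure.pi_pi]
  simp [unif_Ici a h1 h2, Finset.prod_const]

lemma pi_section (n : ℕ) (hne : (Finset.univ : Finset (Fin n)).Nonempty)
    (s t : ℝ) (hs0 : 0 < s) (hs1 : s ≤ 1) (ht0 : 0 < t) (ht1 : t ≤ 1) :
    (Measure.pi fun _ : Fin n => unif)
      {x | |min (Finset.univ.inf' hne x) s| < t}
      = ENNReal.ofReal (((1 + t) / 2) ^ n - if t ≤ s then ((1 - t) / 2) ^ n else 0) := by
  by_cases h : t ≤ s
  · have hset : {x : Fin n → ℝ | |min (Finset.univ.inf' hne x) s| < t}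
        = {x | ∀ i, -t < x i} \ {x | ∀ i, t ≤ x i} := by
      ext x
      simp only [Set.mem_setOf_eq, Set.mem_diff, abs_lt, lt_min_iff, min_lt_iff,
        Finset.lt_inf'_iff, Finset.inf'_lt_iff, Finset.mem_univ, true_and, true_implies, not_forall,
        not_le, exists_prop]
      constructor
      · rintro ⟨⟨hA, -⟩, hB | hB⟩
        · exact ⟨hA, hB⟩
        · exact absurd hB (not_lt.2 h)
      · rintro ⟨hA, hB⟩; exact ⟨⟨hA, by linarith⟩, Or.inl hB⟩
    have hBA : {x : Fin n → ℝ | ∀ i, t ≤ x i} ⊆ {x | ∀ i, -t < x i} :=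
      fun x hx i => lt_of_lt_of_le (by linarith) (hx i)
    have hBm : MeasurableSet {x : Fin n → ℝ | ∀ i, t ≤ x i} := by
      have h2 : {x : Fin n → ℝ | ∀ i, t ≤ x i} = Set.pi Set.univ (fun _ => Set.Ici t) := by
        ext x; simp [Set.mem_pi, Pi.le_def]
      rw [h2]; exact MeasurableSet.univ_pi fun _ => measurableSet_Ici
    rw [hset, measure_diff hBA hBm.nullMeasurableSet (measure_ne_top _ _),
      pi_cube_Ioi n (-t) (by linarith) (by linarith), pi_cube_Ici n t (by linarith) ht1]
    rw [show (1 : ℝ) - -t = 1 + t by ring, if_pos h,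
      ← ENNReal.ofReal_pow (by linarith), ← ENNReal.ofReal_pow (by linarith),
      ← ENNReal.ofReal_sub _ (pow_nonneg (by linarith) n)]
  · have hset : {x : Fin n → ℝ | |min (Finset.univ.inf' hne x) s| < t}
        = {x | ∀ i, -t < x i} := by
      ext x
      simp only [Set.mem_setOf_eq, abs_lt, lt_min_iff, min_lt_iff,
        Finset.lt_inf'_iff, Finset.inf'_lt_iff, Finset.mem_univ, true_and, true_implies]
      constructor
      · rintro ⟨⟨hA, -⟩, -⟩; exact hA
      · intro hA; exact ⟨⟨hA, by linarith⟩, Or.inr (by linarith [not_le.1 h])⟩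
    rw [hset, pi_cube_Ioi n (-t) (by linarith) (by linarith),
      show (1 : ℝ) - -t = 1 + t by ring, if_neg h, sub_zero,
      ← ENNReal.ofReal_pow (by linarith)]

lemma int_aux1 (n : ℕ) (a b : ℝ) :
    ∫ t in a..b, ((1 + t) / 2) ^ n
      = (2 / (n + 1)) * (((1 + b) / 2) ^ (n + 1) - ((1 + a) / 2) ^ (n + 1)) := by
  have hn : (n : ℝ) + 1 ≠ 0 := by positivity
  have hd : ∀ t : ℝ, HasDerivAt (fun u => (2 / ((n : ℝ) + 1)) * ((1 + u) / 2) ^ (n + 1))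
      (((1 + t) / 2) ^ n) t := by
    intro t
    have h1 : HasDerivAt (fun u : ℝ => (1 + u) / 2) (1 / 2) t := by
      simpa using ((hasDerivAt_id t).const_add 1).div_const 2
    have h2 := (h1.pow (n + 1)).const_mul (2 / ((n : ℝ) + 1))
    refine h2.congr_deriv ?_
    push_cast
    field_simp
  rw [intervalIntegral.integral_eq_sub_of_hasDerivAt (fun t _ => hd t)
    (Continuous.intervalIntegrable (by continuity) a b)]
  ring

lemma int_aux2 (n : ℕ) (a b : ℝ) :
    ∫ t in a..b, ((1 - t) / 2) ^ n
      = (2 / (n + 1)) * (((1 - a) / 2) ^ (n + 1) - ((1 - b) / 2) ^ (n + 1)) := by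
  have hn : (n : ℝ) + 1 ≠ 0 := by positivity
  have hd : ∀ t : ℝ, HasDerivAt (fun u => -((2 / ((n : ℝ) + 1)) * ((1 - u) / 2) ^ (n + 1)))
      (((1 - t) / 2) ^ n) t := by
    intro t
    have h1 : HasDerivAt (fun u : ℝ => (1 - u) / 2) (-(1 / 2)) t := by
      have := ((hasDerivAt_id t).const_sub 1).div_const 2
      refine this.congr_deriv ?_
      norm_num
    have h2 := ((h1.pow (n + 1)).const_mul (2 / ((n : ℝ) + 1))).neg
    refine h2.congr_deriv ?_
    push_cast
    field_simp
  rw [intervalIntegral.integral_eq_sub_of_hasDerivAt (fun t _ => hd t)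
    (Continuous.intervalIntegrable (by continuity) a b)]
  ring

noncomputable def hfun (n : ℕ) (s : ℝ) : ℝ → ℝ :=
  fun t => ((1 + t) / 2) ^ n - if t ≤ s then ((1 - t) / 2) ^ n else 0

noncomputable def gfun (n : ℕ) (s : ℝ) : ℝ → ℝ := fun z => hfun n s |z|

lemma hfun_if_eq (n : ℕ) (s : ℝ) :
    (fun t : ℝ => if t ≤ s then ((1 - t) / 2) ^ n else 0)
      = Set.indicator (Set.Iic s) (fun t => ((1 - t) / 2) ^ n) := by
  funext t
  simp [Set.indicator_apply, Set.mem_Iic]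

lemma hfun_intervalIntegrable (n : ℕ) (s : ℝ) (a b : ℝ) :
    IntervalIntegrable (hfun n s) volume a b := by
  apply IntervalIntegrable.sub
  · exact Continuous.intervalIntegrable (by continuity) a b
  · rw [intervalIntegrable_iff, hfun_if_eq]
    exact (Continuous.integrableOn_uIoc (by continuity)).indicator measurableSet_Iic

lemma gfun_intervalIntegrable (n : ℕ) (s : ℝ) (a b : ℝ) :
    IntervalIntegrable (gfun n s) volume a b := by
  apply IntervalIntegrable.sub
  · exact Continuous.intervalIntegrable (by continuity) a b
  · rw [intervalIntegrable_iff]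
    have h : (fun z : ℝ => if |z| ≤ s then ((1 - |z|) / 2) ^ n else 0)
        = Set.indicator {z : ℝ | |z| ≤ s} (fun z => ((1 - |z|) / 2) ^ n) := by
      funext z; simp [Set.indicator_apply, Set.mem_setOf_eq]
    rw [h]
    exact (Continuous.integrableOn_uIoc (by continuity)).indicator
      (measurableSet_le measurable_abs measurable_const)

lemma gfun_measurable (n : ℕ) (s : ℝ) : Measurable (gfun n s) := by
  apply Measurable.sub
  · exact (by continuity : Continuous fun z : ℝ => ((1 + |z|) / 2) ^ n).measurable
  · have h : (fun z : ℝ => if |z| ≤ s then ((1 - |z|) / 2) ^ n else 0)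
        = Set.indicator {z : ℝ | |z| ≤ s} (fun z => ((1 - |z|) / 2) ^ n) := by
      funext z; simp [Set.indicator_apply, Set.mem_setOf_eq]
    rw [h]
    exact Measurable.indicator
      (by continuity : Continuous fun z : ℝ => ((1 - |z|) / 2) ^ n).measurable
      (measurableSet_le measurable_abs measurable_const)

lemma gfun_nonneg (n : ℕ) (s : ℝ) (hs1 : s ≤ 1) (z : ℝ) : 0 ≤ gfun n s z := by
  unfold gfun hfun
  by_cases hzs : |z| ≤ s
  · simp only [if_pos hzs]
    have h1 : (0:ℝ) ≤ (1 - |z|) / 2 := by linarith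
    have h2 : ((1 - |z|) / 2) ^ n ≤ ((1 + |z|) / 2) ^ n :=
      pow_le_pow_left₀ h1 (by linarith [abs_nonneg z]) n
    linarith
  · simp only [if_neg hzs, sub_zero]
    positivity

lemma gfun_le_one (n : ℕ) (s : ℝ) (z : ℝ) (hz : |z| ≤ 1) : gfun n s z ≤ 1 := by
  unfold gfun hfun
  have h1 : ((1 + |z|) / 2) ^ n ≤ 1 := pow_le_one₀ (by positivity) (by linarith)
  have h2 : (0:ℝ) ≤ (if |z| ≤ s then ((1 - |z|) / 2) ^ n else 0) := by
    split
    · next h => exact pow_nonneg (by linarith) n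
    · exact le_refl 0
  linarith

lemma gfun_integrable (n : ℕ) (s : ℝ) (hs1 : s ≤ 1) : Integrable (gfun n s) unif := by
  rw [unif, integrable_smul_measure (by norm_num) (by norm_num)]
  apply Integrable.mono' (integrable_const (1:ℝ))
    ((gfun_measurable n s).aestronglyMeasurable.restrict)
  filter_upwards [ae_restrict_mem measurableSet_Icc] with z hz
  rw [Real.norm_eq_abs, abs_of_nonneg (gfun_nonneg n s hs1 z)]
  exact gfun_le_one n s z (abs_le.mpr ⟨hz.1, hz.2⟩)

lemma gfun_integral (n : ℕ) (s : ℝ) (hs0 : 0 < s) (hs1 : s ≤ 1) :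
    ∫ z, gfun n s z ∂unif
      = (2 / (n + 1)) * (1 - (1 / 2) ^ (n + 1))
        - (2 / (n + 1)) * ((1 / 2) ^ (n + 1) - ((1 - s) / 2) ^ (n + 1)) := by
  rw [unif, integral_smul_measure, ENNReal.toReal_inv, ENNReal.toReal_ofNat, smul_eq_mul]
  rw [MeasureTheory.integral_Icc_eq_integral_Ioc,
    ← intervalIntegral.integral_of_le (by norm_num : (-1:ℝ) ≤ 1)]
  rw [← intervalIntegral.integral_add_adjacent_intervals
    (gfun_intervalIntegrable n s (-1) 0) (gfun_intervalIntegrable n s 0 1)]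
  have e1 : ∫ z in (-1:ℝ)..0, gfun n s z = ∫ t in (0:ℝ)..1, hfun n s t := by
    have hEq : Set.EqOn (gfun n s) (fun z => hfun n s (-z)) (Set.uIcc (-1:ℝ) 0) := by
      intro z hz
      rw [Set.uIcc_of_le (by norm_num : (-1:ℝ) ≤ 0)] at hz
      unfold gfun
      rw [abs_of_nonpos hz.2]
    rw [intervalIntegral.integral_congr hEq, intervalIntegral.integral_comp_neg]
    simp only [neg_zero, neg_neg]
  have e2 : ∫ z in (0:ℝ)..1, gfun n s z = ∫ t in (0:ℝ)..1, hfun n s t := by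
    apply intervalIntegral.integral_congr
    intro z hz
    rw [Set.uIcc_of_le (by norm_num : (0:ℝ) ≤ 1)] at hz
    unfold gfun
    rw [abs_of_nonneg hz.1]
  rw [e1, e2]
  have e3 : ∫ t in (0:ℝ)..1, hfun n s t
      = (∫ t in (0:ℝ)..1, ((1 + t) / 2) ^ n) - ∫ t in (0:ℝ)..s, ((1 - t) / 2) ^ n := by
    unfold hfun
    rw [intervalIntegral.integral_sub (Continuous.intervalIntegrable (by continuity) 0 1)
      (by
        rw [intervalIntegrable_iff, hfun_if_eq]
        exact (Continuous.integrableOn_uIoc (by continuity)).indicator measurableSet_Iic)]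
    congr 1
    rw [intervalIntegral.integral_of_le zero_le_one, hfun_if_eq,
      setIntegral_indicator measurableSet_Iic,
      show Set.Ioc (0:ℝ) 1 ∩ Set.Iic s = Set.Ioc 0 s by
        ext t
        simp only [Set.mem_inter_iff, Set.mem_Ioc, Set.mem_Iic]
        constructor
        · rintro ⟨⟨h1, h2⟩, h3⟩; exact ⟨h1, h3⟩
        · rintro ⟨h1, h2⟩; exact ⟨⟨h1, by linarith⟩, h2⟩,
      ← intervalIntegral.integral_of_le hs0.le]
  rw [e3, int_aux1, int_aux2]
  norm_num
  ring

lemma main_aux (m : ℕ) (hm : 1 ≤ m) (hne : (Finset.univ : Finset (Fin m)).Nonempty)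
    (s : ℝ) (hs0 : 0 < s) (hs1 : s ≤ 1) :
    (((Measure.pi fun _ : Fin m => unif).prod unif)
        {p : (Fin m → ℝ) × ℝ | |min (Finset.univ.inf' hne p.1) s| < |p.2|}).toReal
      = ((2 : ℝ) ^ (m + 1) - 2 + (1 - s) ^ (m + 1)) / ((m + 1 : ℕ) * 2 ^ m) := by
  have hS : MeasurableSet {p : (Fin m → ℝ) × ℝ | |min (Finset.univ.inf' hne p.1) s| < |p.2|} := by
    have hSeq : {p : (Fin m → ℝ) × ℝ | |min (Finset.univ.inf' hne p.1) s| < |p.2|}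
        = (⋂ i, {p : (Fin m → ℝ) × ℝ | -|p.2| < p.1 i})
          ∩ ({p : (Fin m → ℝ) × ℝ | s < |p.2|}
            ∪ ⋃ i, {p : (Fin m → ℝ) × ℝ | p.1 i < |p.2|}) := by
      ext p
      have hps : -|p.2| < s := lt_of_le_of_lt (neg_nonpos.mpr (abs_nonneg _)) hs0
      simp only [Set.mem_setOf_eq, Set.mem_inter_iff, Set.mem_iInter, Set.mem_union,
        Set.mem_iUnion, abs_lt, lt_min_iff, min_lt_iff, Finset.lt_inf'_iff,
        Finset.inf'_lt_iff, Finset.mem_univ, true_and, true_implies, exists_prop]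
      tauto
    rw [hSeq]
    apply MeasurableSet.inter
    · exact MeasurableSet.iInter fun i =>
        measurableSet_lt measurable_snd.abs.neg (measurable_fst.eval)
    · exact (measurableSet_lt measurable_const measurable_snd.abs).union
        (MeasurableSet.iUnion fun i =>
          measurableSet_lt (measurable_fst.eval) measurable_snd.abs)
  rw [Measure.prod_apply_symm hS]
  have h1 : unif (Set.Icc (-1:ℝ) 1)ᶜ = 0 := by
    rw [unif, Measure.smul_apply, Measure.restrict_apply measurableSet_Icc.compl]
    simp
  have h2 : unif ({0} : Set ℝ) = 0 := by
    rw [unif, Measure.smul_apply, Measure.restrict_apply (measurableSet_singleton 0)]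
    have h0 : volume (({0} : Set ℝ) ∩ Set.Icc (-1:ℝ) 1) = 0 :=
      measure_mono_null Set.inter_subset_left Real.volume_singleton
    rw [h0, smul_zero]
  have hae : ∀ᵐ z ∂unif, z ∈ Set.Icc (-1:ℝ) 1 ∧ z ≠ 0 := by
    rw [ae_iff]
    apply measure_mono_null _ (measure_union_null h1 h2)
    intro z hz
    simp only [Set.mem_setOf_eq, not_and_or, not_not] at hz
    rcases hz with h | h
    · exact Or.inl h
    · exact Or.inr h
  have hsec : (fun z => (Measure.pi fun _ : Fin m => unif)
        ((fun x => (x, z)) ⁻¹'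
          {p : (Fin m → ℝ) × ℝ | |min (Finset.univ.inf' hne p.1) s| < |p.2|}))
      =ᵐ[unif] fun z => ENNReal.ofReal (gfun m s z) := by
    filter_upwards [hae] with z hz
    have hpre : ((fun x => (x, z)) ⁻¹'
          {p : (Fin m → ℝ) × ℝ | |min (Finset.univ.inf' hne p.1) s| < |p.2|})
        = {x : Fin m → ℝ | |min (Finset.univ.inf' hne x) s| < |z|} := rfl
    rw [hpre, pi_section m hne s |z| hs0 hs1 (abs_pos.mpr hz.2) (abs_le.mpr ⟨hz.1.1, hz.1.2⟩)]
    rfl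
  rw [lintegral_congr_ae hsec,
    ← MeasureTheory.ofReal_integral_eq_lintegral_ofReal (gfun_integrable m s hs1)
      (ae_of_all _ (gfun_nonneg m s hs1)),
    gfun_integral m s hs0 hs1]
  have hval : (2 / ((m:ℝ) + 1)) * (1 - (1 / 2) ^ (m + 1))
      - (2 / ((m:ℝ) + 1)) * ((1 / 2) ^ (m + 1) - ((1 - s) / 2) ^ (m + 1))
      = ((2 : ℝ) ^ (m + 1) - 2 + (1 - s) ^ (m + 1)) / ((m + 1 : ℕ) * 2 ^ m) := by
    have hm0 : ((m:ℝ) + 1) ≠ 0 := by positivity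
    push_cast
    rw [div_pow, div_pow, one_pow]
    field_simp
    ring
  rw [hval, ENNReal.toReal_ofReal]
  apply div_nonneg
  · have h2m : (2:ℝ) ≤ 2 ^ (m+1) := by
      calc (2:ℝ) = 2 ^ 1 := (pow_one 2).symm
      _ ≤ 2 ^ (m+1) := pow_le_pow_right₀ one_le_two (by omega)
    have h3 : (0:ℝ) ≤ (1-s) ^ (m+1) := pow_nonneg (by linarith) _
    linarith
  · positivity

theorem stmt_8 (k : ℕ) (hk : 2 ≤ k) (s : ℝ) (hs0 : 0 < s) (hs1 : s ≤ 1) :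
    (((Measure.pi fun _ : Fin (k - 1) => unif).prod unif)
        {p : (Fin (k - 1) → ℝ) × ℝ |
          |min (Finset.univ.inf' (Finset.univ_nonempty_iff.2 ⟨⟨0, by omega⟩⟩) p.1) s| < |p.2|}).toReal
      = ((2 : ℝ) ^ k - 2 + (1 - s) ^ k) / (k * 2 ^ (k - 1)) := by
  obtain ⟨m, rfl⟩ : ∃ m, k = m + 1 := ⟨k - 1, by omega⟩
  exact main_aux (m + 1 - 1) (by omega)
    (Finset.univ_nonempty_iff.2 ⟨⟨0, by omega⟩⟩) s hs0 hs1
end
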